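/- Let d, L ∈ ℕ and let H be a bounded selfadjoint operator on ℓ²(ℤ^d, ℂ^L) whose matrix elements h(x, y) = ⟨x|H|y⟩ ∈ M_L(ℂ) vanish whenever max_{1≤j≤d} |x_j − y_j| > R (finite range). For j ∈ {1, …, d}, let K_j be the bounded operator with matrix elements ⟨x|K_j|y⟩ = (x_j − y_j)·h(x, y), and for ρ > 0 let S_j be the bounded multiplication operator (S_jψ)(x) = sin(π x_j/(2ρ))·ψ(x). Then ‖S_j H − H S_j‖ ≤ (π/(2ρ))·‖K_j‖, where ‖·‖ is the operator norm. -/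

import Mathlib

set_option maxHeartbeats 1000000

noncomputable section

/-- The Hilbert space `ℓ²(ℤ^d, ℂ^L)`. -/
abbrev Ell2 (d L : ℕ) := lp (fun _ : (Fin d → ℤ) × Fin L => ℂ) 2

/-- The matrix element `⟨x, i| H |y, l⟩` of an operator `H` on `ℓ²(ℤ^d, ℂ^L)`. -/
def matElem {d L : ℕ} (H : Ell2 d L →L[ℂ] Ell2 d L) (x y : Fin d → ℤ) (i l : Fin L) : ℂ :=
  inner ℂ (lp.single 2 (x, i) (1 : ℂ)) (H (lp.single 2 (y, l) (1 : ℂ)))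

open scoped ComplexConjugate

namespace Stmt10Aux

variable {d L : ℕ}

/-- standard basis vectors -/
def bv (e : (Fin d → ℤ) × Fin L) : Ell2 d L := lp.single 2 e (1 : ℂ)

lemma orthonormal_bv : Orthonormal ℂ (bv (d := d) (L := L)) := by
  rw [orthonormal_iff_ite]
  intro e e'
  rw [bv, bv, lp.inner_single_left]
  rcases eq_or_ne e e' with rfl | h
  · simp [lp.single_apply_self]
  · simp [lp.single_apply_ne _ _ _ h, h]

lemma ext_bv {v w : Ell2 d L} (h : ∀ e, (inner ℂ (bv e) v : ℂ) = inner ℂ (bv e) w) : v = w := by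
  apply lp.ext
  funext e
  have := h e
  rw [bv, lp.inner_single_left, lp.inner_single_left] at this
  simpa using this

lemma dense_span_bv :
    Dense (↑(Submodule.span ℂ (Set.range (bv (d := d) (L := L)))) : Set (Ell2 d L)) := by
  intro f
  have hsum : HasSum (fun e => lp.single 2 e (f e)) f :=
    lp.hasSum_single ENNReal.ofNat_ne_top f
  refine mem_closure_of_tendsto
    (f := fun s : Finset ((Fin d → ℤ) × Fin L) => ∑ e ∈ s, lp.single 2 e (f e)) hsum
    (Filter.Eventually.of_forall fun s => ?_)
  exact Submodule.sum_mem _ fun e _ => by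
    have : lp.single 2 e (f e) = f e • bv e := by
      rw [bv, ← lp.single_smul]
      norm_num
    rw [this]
    exact Submodule.smul_mem _ _ (Submodule.subset_span ⟨e, rfl⟩)

variable {S : Ell2 d L →L[ℂ] Ell2 d L} {s : (Fin d → ℤ) × Fin L → ℝ}

lemma adjoint_diag (hS : ∀ e, S (bv e) = ((s e : ℝ) : ℂ) • bv e) (e : (Fin d → ℤ) × Fin L) :
    (ContinuousLinearMap.adjoint S) (bv e) = ((s e : ℝ) : ℂ) • bv e := by
  apply ext_bv
  intro e'
  rw [ContinuousLinearMap.adjoint_inner_right, hS, inner_smul_left, inner_smul_right,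
    Complex.conj_ofReal]
  rcases eq_or_ne e' e with rfl | h
  · rfl
  · rw [orthonormal_bv.2 h]
    ring

lemma matElem_comm (H : Ell2 d L →L[ℂ] Ell2 d L)
    (hS : ∀ e, S (bv e) = ((s e : ℝ) : ℂ) • bv e) (e e' : (Fin d → ℤ) × Fin L) :
    (inner ℂ (bv e) ((S * H - H * S) (bv e')) : ℂ)
      = (((s e - s e' : ℝ)) : ℂ) * inner ℂ (bv e) (H (bv e')) := by
  have h1 : (inner ℂ (bv e) (S (H (bv e'))) : ℂ) = ((s e : ℝ) : ℂ) * inner ℂ (bv e) (H (bv e')) := by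
    rw [← ContinuousLinearMap.adjoint_inner_left, adjoint_diag hS, inner_smul_left,
      Complex.conj_ofReal]
  have h2 : (inner ℂ (bv e) (H (S (bv e'))) : ℂ) = ((s e' : ℝ) : ℂ) * inner ℂ (bv e) (H (bv e')) := by
    rw [hS, map_smul, inner_smul_right]
  simp only [ContinuousLinearMap.sub_apply, ContinuousLinearMap.mul_apply, inner_sub_right,
    h1, h2]
  push_cast
  ring

/-- finite linear combinations of basis vectors -/
def vec (A : Finset ((Fin d → ℤ) × Fin L)) (c : (Fin d → ℤ) × Fin L → ℂ) : Ell2 d L :=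
  ∑ e ∈ A, c e • bv e

lemma inner_vec_apply (W : Ell2 d L →L[ℂ] Ell2 d L) (A B : Finset ((Fin d → ℤ) × Fin L))
    (c f : (Fin d → ℤ) × Fin L → ℂ) :
    (inner ℂ (vec A c) (W (vec B f)) : ℂ)
      = ∑ e ∈ A, ∑ e' ∈ B, conj (c e) * (f e' * inner ℂ (bv e) (W (bv e'))) := by
  simp only [vec, map_sum, map_smul, sum_inner, inner_sum, inner_smul_left, inner_smul_right,
    Finset.mul_sum, smul_eq_mul]
  rw [Finset.sum_comm]
  exact Finset.sum_congr rfl fun e _ => Finset.sum_congr rfl fun e' _ => by ring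

lemma norm_vec (A : Finset ((Fin d → ℤ) × Fin L)) (c : (Fin d → ℤ) × Fin L → ℂ) :
    ‖vec A c‖ = Real.sqrt (∑ e ∈ A, ‖c e‖ ^ 2) := by
  have h := orthonormal_bv.inner_sum c c A
  rw [vec, norm_eq_sqrt_re_inner (𝕜 := ℂ), h]
  congr 1
  rw [map_sum]
  exact Finset.sum_congr rfl fun e _ => by
    rw [Complex.conj_mul', ← Complex.ofReal_pow]
    exact RCLike.ofReal_re _

lemma norm_vec_congr (A : Finset ((Fin d → ℤ) × Fin L)) (c c' : (Fin d → ℤ) × Fin L → ℂ)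
    (h : ∀ e, ‖c' e‖ = ‖c e‖) : ‖vec A c'‖ = ‖vec A c‖ := by
  rw [norm_vec, norm_vec]
  congr 1
  exact Finset.sum_congr rfl fun e _ => by rw [h]

open Complex in
lemma key_integral (c : ℂ) (hc : c ≠ 0) (a b : ℝ) :
    (∫ t in (0:ℝ)..1, Complex.exp ((((1-t)*b + t*a : ℝ) : ℂ) * c)) * (((a:ℂ) - b) * c)
      = Complex.exp ((a:ℂ)*c) - Complex.exp ((b:ℂ)*c) := by
  rcases eq_or_ne a b with rfl | hab
  · simp
  have hab' : ((a:ℂ) - b) ≠ 0 := sub_ne_zero.mpr (by exact_mod_cast hab)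
  have h1 : ∀ t : ℝ, Complex.exp ((((1-t)*b + t*a : ℝ) : ℂ) * c)
      = Complex.exp ((b:ℂ)*c) * Complex.exp ((((a:ℂ)-b)*c) * t) := by
    intro t
    rw [← Complex.exp_add]
    congr 1
    push_cast
    ring
  have h2 : Complex.exp ((b:ℂ)*c) * Complex.exp (((a:ℂ)-b)*c) = Complex.exp ((a:ℂ)*c) := by
    rw [← Complex.exp_add]
    congr 1
    ring
  simp only [h1]
  rw [intervalIntegral.integral_const_mul, integral_exp_mul_complex (mul_ne_zero hab' hc)]
  norm_num
  rw [mul_assoc, div_mul_cancel₀ _ (mul_ne_zero hab' hc)]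
  linear_combination h2

lemma conj_exp_I (r : ℝ) : conj (Complex.exp ((r:ℂ) * Complex.I))
    = Complex.exp (-((r:ℂ) * Complex.I)) := by
  rw [← Complex.exp_conj]
  simp

lemma conj_exp_neg_I (r : ℝ) : conj (Complex.exp (-((r:ℂ) * Complex.I)))
    = Complex.exp ((r:ℂ) * Complex.I) := by
  rw [← Complex.exp_conj]
  simp

lemma core (θ m n : ℝ) (u v hm k : ℂ) (hk : k = ((m:ℂ) - n) * hm) :
    (∫ t in (0:ℝ)..1, ((θ:ℂ)/2) *
      (conj (u * Complex.exp (-((((θ * (t * m)) : ℝ) : ℂ) * Complex.I))) *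
         (v * Complex.exp ((((θ * ((1-t) * n)) : ℝ) : ℂ) * Complex.I) * k)
       + conj (u * Complex.exp ((((θ * (t * m)) : ℝ) : ℂ) * Complex.I)) *
         (v * Complex.exp (-((((θ * ((1-t) * n)) : ℝ) : ℂ) * Complex.I)) * k)))
    = conj u * (v * ((((Real.sin (θ*m) - Real.sin (θ*n)) : ℝ) : ℂ) * hm)) := by
  set a : ℝ := θ * m with ha
  set b : ℝ := θ * n with hb
  set C : ℂ := ((θ:ℂ)/2) * (conj u * (v * k)) with hC
  have hpt : ∀ t : ℝ, ((θ:ℂ)/2) *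
      (conj (u * Complex.exp (-((((θ * (t * m)) : ℝ) : ℂ) * Complex.I))) *
         (v * Complex.exp ((((θ * ((1-t) * n)) : ℝ) : ℂ) * Complex.I) * k)
       + conj (u * Complex.exp ((((θ * (t * m)) : ℝ) : ℂ) * Complex.I)) *
         (v * Complex.exp (-((((θ * ((1-t) * n)) : ℝ) : ℂ) * Complex.I)) * k))
      = C * Complex.exp ((((1-t)*b + t*a : ℝ) : ℂ) * Complex.I)
        + C * Complex.exp ((((1-t)*b + t*a : ℝ) : ℂ) * (-Complex.I)) := by
    intro t
    have ep : Complex.exp ((((θ * (t * m)) : ℝ):ℂ) * Complex.I)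
        * Complex.exp ((((θ * ((1-t) * n)) : ℝ):ℂ) * Complex.I)
        = Complex.exp ((((1-t)*b + t*a : ℝ) : ℂ) * Complex.I) := by
      rw [← Complex.exp_add]; congr 1; rw [ha, hb]; push_cast; ring
    have em : Complex.exp (-((((θ * (t * m)) : ℝ):ℂ) * Complex.I))
        * Complex.exp (-((((θ * ((1-t) * n)) : ℝ):ℂ) * Complex.I))
        = Complex.exp ((((1-t)*b + t*a : ℝ) : ℂ) * (-Complex.I)) := by
      rw [← Complex.exp_add]; congr 1; rw [ha, hb]; push_cast; ring
    rw [map_mul, map_mul, conj_exp_I, conj_exp_neg_I, hC]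
    linear_combination ((θ:ℂ)/2) * conj u * v * k * ep + ((θ:ℂ)/2) * conj u * v * k * em
  rw [intervalIntegral.integral_congr (g := fun t : ℝ =>
      C * Complex.exp ((((1-t)*b + t*a : ℝ) : ℂ) * Complex.I)
        + C * Complex.exp ((((1-t)*b + t*a : ℝ) : ℂ) * (-Complex.I))) (fun t _ => hpt t)]
  have cont : ∀ c : ℂ, Continuous fun t : ℝ =>
      Complex.exp ((((1-t)*b + t*a : ℝ) : ℂ) * c) := by
    intro c
    fun_prop
  rw [intervalIntegral.integral_add ((show Continuous fun t : ℝ => C * Complex.exp ((((1-t)*b + t*a : ℝ) : ℂ) * Complex.I) from continuous_const.mul (cont _)).intervalIntegrable 0 1)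
      ((show Continuous fun t : ℝ => C * Complex.exp ((((1-t)*b + t*a : ℝ) : ℂ) * (-Complex.I)) from continuous_const.mul (cont _)).intervalIntegrable 0 1),
    intervalIntegral.integral_const_mul, intervalIntegral.integral_const_mul]
  have kp := key_integral Complex.I Complex.I_ne_zero a b
  have km := key_integral (-Complex.I) (neg_ne_zero.mpr Complex.I_ne_zero) a b
  rw [Complex.ofReal_sub, Complex.ofReal_sin, Complex.ofReal_sin, Complex.sin, Complex.sin]
  simp only [mul_neg, neg_mul, neg_neg] at kp km ⊢
  have hab : ((a:ℝ):ℂ) - ((b:ℝ):ℂ) = (θ:ℂ) * ((m:ℂ) - (n:ℂ)) := by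
    rw [ha, hb]; push_cast; ring
  set Xp : ℂ := ∫ t in (0:ℝ)..1, Complex.exp ((((1-t)*b + t*a : ℝ) : ℂ) * Complex.I) with hXp
  set Xm : ℂ := ∫ t in (0:ℝ)..1, Complex.exp (-((((1-t)*b + t*a : ℝ) : ℂ) * Complex.I)) with hXm
  have kp' : Xp * (((a:ℂ) - b))
      = (Complex.exp ((a:ℂ)*Complex.I) - Complex.exp ((b:ℂ)*Complex.I)) * (-Complex.I) := by
    linear_combination (-Complex.I) * kp + (Xp * (((a:ℂ) - b))) * Complex.I_mul_I
  have km' : Xm * (((a:ℂ) - b))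
      = (Complex.exp (-((a:ℂ)*Complex.I)) - Complex.exp (-((b:ℂ)*Complex.I))) * Complex.I := by
    linear_combination Complex.I * km + (Xm * (((a:ℂ) - b))) * Complex.I_mul_I
  rw [hC, hk]
  linear_combination ((conj u * (v * hm))/2) * kp' + ((conj u * (v * hm))/2) * km'
    + (-(conj u * (v * hm))/2 * (Xp + Xm)) * hab

lemma norm_exp_I (r : ℝ) : ‖Complex.exp ((r:ℂ) * Complex.I)‖ = 1 :=
  Complex.norm_exp_ofReal_mul_I r

lemma norm_exp_neg_I (r : ℝ) : ‖Complex.exp (-((r:ℂ) * Complex.I))‖ = 1 := by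
  rw [show -((r:ℂ) * Complex.I) = ((-r : ℝ) : ℂ) * Complex.I by push_cast; ring]
  exact Complex.norm_exp_ofReal_mul_I (-r)

end Stmt10Aux

open Stmt10Aux in
/-- for a bounded selfadjoint finite range operator `H` on `ℓ²(ℤ^d, ℂ^L)`,
the commutator of `H` with the multiplication operator by `sin(π x_j/(2ρ))` is bounded by
`(π/(2ρ))·‖[X_j, H]‖`. -/
theorem stmt10 {d L : ℕ} (R : ℕ) (H K S : Ell2 d L →L[ℂ] Ell2 d L)
    (hH : IsSelfAdjoint H)
    (hrange : ∀ x y i l, (∃ j', (R : ℤ) < |x j' - y j'|) → matElem H x y i l = 0)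
    (j : Fin d) (ρ : ℝ) (hρ : 0 < ρ)
    (hK : ∀ x y i l, matElem K x y i l = ((x j - y j : ℤ) : ℂ) * matElem H x y i l)
    (hS : ∀ (x : Fin d → ℤ) (i : Fin L), S (lp.single 2 (x, i) (1 : ℂ)) =
      ((Real.sin (Real.pi * (x j : ℤ) / (2 * ρ)) : ℝ) : ℂ) • lp.single 2 (x, i) (1 : ℂ)) :
    ‖S * H - H * S‖ ≤ (Real.pi / (2 * ρ)) * ‖K‖ := by
  classical
  set θ : ℝ := Real.pi / (2 * ρ) with hθdef
  have hθ : 0 ≤ θ := div_nonneg Real.pi_pos.le (by linarith)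
  set m : (Fin d → ℤ) × Fin L → ℝ := fun e => ((e.1 j : ℤ) : ℝ) with hm
  -- reformulate hypotheses
  have hs : ∀ e : (Fin d → ℤ) × Fin L,
      S (bv e) = ((Real.sin (θ * (m e)) : ℝ) : ℂ) • bv e := by
    intro e
    rw [bv, hS e.1 e.2, hm, hθdef]
    norm_num [div_mul_eq_mul_div]
  have hK' : ∀ e e' : (Fin d → ℤ) × Fin L,
      (inner ℂ (bv e) (K (bv e')) : ℂ) = (((m e : ℝ) : ℂ) - ((m e' : ℝ) : ℂ))
        * inner ℂ (bv e) (H (bv e')) := by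
    intro e e'
    have := hK e.1 e'.1 e.2 e'.2
    rw [matElem, matElem] at this
    rw [bv, bv, this, hm]
    push_cast
    ring
  set T : Ell2 d L →L[ℂ] Ell2 d L := S * H - H * S with hT
  -- the key bound on finite linear combinations
  have main : ∀ (A B : Finset ((Fin d → ℤ) × Fin L)) (c f : (Fin d → ℤ) × Fin L → ℂ),
      ‖(inner ℂ (vec A c) (T (vec B f)) : ℂ)‖ ≤ θ * ‖K‖ * (‖vec A c‖ * ‖vec B f‖) := by
    intro A B c f
    set cp : ℝ → (Fin d → ℤ) × Fin L → ℂ := fun t e =>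
      c e * Complex.exp (-((((θ * (t * m e)) : ℝ) : ℂ) * Complex.I)) with hcp
    set fp : ℝ → (Fin d → ℤ) × Fin L → ℂ := fun t e =>
      f e * Complex.exp ((((θ * ((1-t) * m e)) : ℝ) : ℂ) * Complex.I) with hfp
    set cm : ℝ → (Fin d → ℤ) × Fin L → ℂ := fun t e =>
      c e * Complex.exp ((((θ * (t * m e)) : ℝ) : ℂ) * Complex.I) with hcm
    set fm : ℝ → (Fin d → ℤ) × Fin L → ℂ := fun t e =>
      f e * Complex.exp (-((((θ * ((1-t) * m e)) : ℝ) : ℂ) * Complex.I)) with hfm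
    set CI : (Fin d → ℤ) × Fin L → (Fin d → ℤ) × Fin L → ℝ → ℂ := fun e e' t =>
      ((θ:ℂ)/2) *
        (conj (c e * Complex.exp (-((((θ * (t * m e)) : ℝ) : ℂ) * Complex.I))) *
           (f e' * Complex.exp ((((θ * ((1-t) * m e')) : ℝ) : ℂ) * Complex.I)
             * inner ℂ (bv e) (K (bv e')))
         + conj (c e * Complex.exp ((((θ * (t * m e)) : ℝ) : ℂ) * Complex.I)) *
           (f e' * Complex.exp (-((((θ * ((1-t) * m e')) : ℝ) : ℂ) * Complex.I))
             * inner ℂ (bv e) (K (bv e')))) with hCI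
    have hcont : ∀ e e', Continuous (CI e e') := by
      intro e e'
      rw [hCI]
      have h1 : Continuous fun t : ℝ =>
          conj (c e * Complex.exp (-((((θ * (t * m e)) : ℝ) : ℂ) * Complex.I))) :=
        Complex.continuous_conj.comp (by fun_prop)
      have h2 : Continuous fun t : ℝ =>
          conj (c e * Complex.exp ((((θ * (t * m e)) : ℝ) : ℂ) * Complex.I)) :=
        Complex.continuous_conj.comp (by fun_prop)
      exact continuous_const.mul ((h1.mul (by fun_prop)).add (h2.mul (by fun_prop)))
    have hRHS : ∀ t : ℝ, ((θ:ℂ)/2) *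
        ((inner ℂ (vec A (cp t)) (K (vec B (fp t))) : ℂ)
          + (inner ℂ (vec A (cm t)) (K (vec B (fm t))) : ℂ))
        = ∑ e ∈ A, ∑ e' ∈ B, CI e e' t := by
      intro t
      rw [inner_vec_apply, inner_vec_apply]
      simp only [← Finset.sum_add_distrib, Finset.mul_sum]
      rfl
    have hid : (inner ℂ (vec A c) (T (vec B f)) : ℂ)
        = ∫ t in (0:ℝ)..1, ((θ:ℂ)/2) *
            ((inner ℂ (vec A (cp t)) (K (vec B (fp t))) : ℂ)
              + (inner ℂ (vec A (cm t)) (K (vec B (fm t))) : ℂ)) := by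
      rw [hT, inner_vec_apply]
      have perpair : ∀ e ∈ A, ∀ e' ∈ B,
          conj (c e) * (f e' * (inner ℂ (bv e) ((S * H - H * S) (bv e')) : ℂ))
            = ∫ t in (0:ℝ)..1, CI e e' t := by
        intro e _ e' _
        rw [matElem_comm (s := fun e => Real.sin (θ * m e)) H hs e e']
        exact (core θ (m e) (m e') (c e) (f e') (inner ℂ (bv e) (H (bv e')))
          (inner ℂ (bv e) (K (bv e'))) (hK' e e')).symm
      rw [Finset.sum_congr rfl fun e he =>
        Finset.sum_congr rfl fun e' he' => perpair e he e' he']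
      have swap : ∫ t in (0:ℝ)..1, ∑ e ∈ A, ∑ e' ∈ B, CI e e' t
          = ∑ e ∈ A, ∑ e' ∈ B, ∫ t in (0:ℝ)..1, CI e e' t := by
        rw [intervalIntegral.integral_finset_sum (fun e _ =>
          ((continuous_finset_sum _ fun e' _ => hcont e e').intervalIntegrable _ _))]
        exact Finset.sum_congr rfl fun e _ =>
          intervalIntegral.integral_finset_sum fun e' _ => (hcont e e').intervalIntegrable _ _
      rw [← swap]
      exact intervalIntegral.integral_congr fun t _ => (hRHS t).symm
    rw [hid]
    have hb : ∀ t ∈ Set.uIoc (0:ℝ) 1, ‖((θ:ℂ)/2) *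
        ((inner ℂ (vec A (cp t)) (K (vec B (fp t))) : ℂ)
          + (inner ℂ (vec A (cm t)) (K (vec B (fm t))) : ℂ))‖
        ≤ θ * ‖K‖ * (‖vec A c‖ * ‖vec B f‖) := by
      intro t _
      have ncp : ‖vec A (cp t)‖ = ‖vec A c‖ := norm_vec_congr _ _ _ fun e => by
        simp only [hcp]; rw [norm_mul, norm_exp_neg_I, mul_one]
      have ncm : ‖vec A (cm t)‖ = ‖vec A c‖ := norm_vec_congr _ _ _ fun e => by
        simp only [hcm]; rw [norm_mul, norm_exp_I, mul_one]
      have nfp : ‖vec B (fp t)‖ = ‖vec B f‖ := norm_vec_congr _ _ _ fun e => by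
        simp only [hfp]; rw [norm_mul, norm_exp_I, mul_one]
      have nfm : ‖vec B (fm t)‖ = ‖vec B f‖ := norm_vec_congr _ _ _ fun e => by
        simp only [hfm]; rw [norm_mul, norm_exp_neg_I, mul_one]
      have h1 : ‖(inner ℂ (vec A (cp t)) (K (vec B (fp t))) : ℂ)‖
          ≤ ‖K‖ * (‖vec A c‖ * ‖vec B f‖) := by
        calc ‖(inner ℂ (vec A (cp t)) (K (vec B (fp t))) : ℂ)‖
            ≤ ‖vec A (cp t)‖ * ‖K (vec B (fp t))‖ := norm_inner_le_norm _ _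
          _ ≤ ‖vec A (cp t)‖ * (‖K‖ * ‖vec B (fp t)‖) := by
              gcongr; exact K.le_opNorm _
          _ = ‖K‖ * (‖vec A c‖ * ‖vec B f‖) := by rw [ncp, nfp]; ring
      have h2 : ‖(inner ℂ (vec A (cm t)) (K (vec B (fm t))) : ℂ)‖
          ≤ ‖K‖ * (‖vec A c‖ * ‖vec B f‖) := by
        calc ‖(inner ℂ (vec A (cm t)) (K (vec B (fm t))) : ℂ)‖
            ≤ ‖vec A (cm t)‖ * ‖K (vec B (fm t))‖ := norm_inner_le_norm _ _
          _ ≤ ‖vec A (cm t)‖ * (‖K‖ * ‖vec B (fm t)‖) := by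
              gcongr; exact K.le_opNorm _
          _ = ‖K‖ * (‖vec A c‖ * ‖vec B f‖) := by rw [ncm, nfm]; ring
      calc ‖((θ:ℂ)/2) * ((inner ℂ (vec A (cp t)) (K (vec B (fp t))) : ℂ)
              + (inner ℂ (vec A (cm t)) (K (vec B (fm t))) : ℂ))‖
          = (θ/2) * ‖(inner ℂ (vec A (cp t)) (K (vec B (fp t))) : ℂ)
              + (inner ℂ (vec A (cm t)) (K (vec B (fm t))) : ℂ)‖ := by
            rw [norm_mul]
            congr 1
            rw [show ((θ:ℂ)/2) = (((θ/2 : ℝ)):ℂ) by push_cast; ring, Complex.norm_real,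
              Real.norm_of_nonneg (by linarith)]
        _ ≤ (θ/2) * (‖(inner ℂ (vec A (cp t)) (K (vec B (fp t))) : ℂ)‖
              + ‖(inner ℂ (vec A (cm t)) (K (vec B (fm t))) : ℂ)‖) :=
            mul_le_mul_of_nonneg_left (norm_add_le _ _) (by linarith)
        _ ≤ (θ/2) * (‖K‖ * (‖vec A c‖ * ‖vec B f‖) + ‖K‖ * (‖vec A c‖ * ‖vec B f‖)) :=
            mul_le_mul_of_nonneg_left (add_le_add h1 h2) (by linarith)
        _ = θ * ‖K‖ * (‖vec A c‖ * ‖vec B f‖) := by ring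
    calc ‖∫ t in (0:ℝ)..1, ((θ:ℂ)/2) *
          ((inner ℂ (vec A (cp t)) (K (vec B (fp t))) : ℂ)
            + (inner ℂ (vec A (cm t)) (K (vec B (fm t))) : ℂ))‖
        ≤ θ * ‖K‖ * (‖vec A c‖ * ‖vec B f‖) * |(1:ℝ) - 0| :=
          intervalIntegral.norm_integral_le_of_norm_le_const hb
      _ = θ * ‖K‖ * (‖vec A c‖ * ‖vec B f‖) := by rw [sub_zero, abs_one, mul_one]
  -- extend the bound to all of the space by density
  have span_bound : ∀ ψ ∈ Submodule.span ℂ (Set.range (bv (d := d) (L := L))),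
      ∀ φ ∈ Submodule.span ℂ (Set.range (bv (d := d) (L := L))),
      ‖(inner ℂ ψ (T φ) : ℂ)‖ ≤ θ * ‖K‖ * (‖ψ‖ * ‖φ‖) := by
    intro ψ hψ φ hφ
    rw [Finsupp.mem_span_range_iff_exists_finsupp] at hψ hφ
    obtain ⟨cψ, hcψ⟩ := hψ
    obtain ⟨cφ, hcφ⟩ := hφ
    have hψ' : ψ = vec cψ.support cψ := by
      rw [← hcψ, vec, Finsupp.sum]
    have hφ' : φ = vec cφ.support cφ := by
      rw [← hcφ, vec, Finsupp.sum]
    rw [hψ', hφ']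
    exact main _ _ _ _
  have all_bound : ∀ ψ φ : Ell2 d L, ‖(inner ℂ ψ (T φ) : ℂ)‖ ≤ θ * ‖K‖ * (‖ψ‖ * ‖φ‖) := by
    have step1 : ∀ φ ∈ Submodule.span ℂ (Set.range (bv (d := d) (L := L))),
        ∀ ψ : Ell2 d L, ‖(inner ℂ ψ (T φ) : ℂ)‖ ≤ θ * ‖K‖ * (‖ψ‖ * ‖φ‖) := by
      intro φ hφ ψ
      have hclosed : IsClosed {ψ : Ell2 d L | ‖(inner ℂ ψ (T φ) : ℂ)‖ ≤ θ * ‖K‖ * (‖ψ‖ * ‖φ‖)} := by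
        apply isClosed_le
        · exact Continuous.norm (Continuous.inner continuous_id continuous_const)
        · exact continuous_const.mul (continuous_norm.mul continuous_const)
      have hsub : (↑(Submodule.span ℂ (Set.range (bv (d := d) (L := L)))) : Set (Ell2 d L))
          ⊆ {ψ : Ell2 d L | ‖(inner ℂ ψ (T φ) : ℂ)‖ ≤ θ * ‖K‖ * (‖ψ‖ * ‖φ‖)} :=
        fun ψ hψ => span_bound ψ hψ φ hφ
      have := hclosed.closure_subset_iff.2 hsub
      rw [dense_span_bv.closure_eq] at this
      exact this (Set.mem_univ ψ)
    intro ψ φ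
    have hclosed : IsClosed {φ : Ell2 d L | ‖(inner ℂ ψ (T φ) : ℂ)‖ ≤ θ * ‖K‖ * (‖ψ‖ * ‖φ‖)} := by
      apply isClosed_le
      · exact Continuous.norm (Continuous.inner continuous_const (T.continuous))
      · exact continuous_const.mul (continuous_const.mul continuous_norm)
    have hsub : (↑(Submodule.span ℂ (Set.range (bv (d := d) (L := L)))) : Set (Ell2 d L))
        ⊆ {φ : Ell2 d L | ‖(inner ℂ ψ (T φ) : ℂ)‖ ≤ θ * ‖K‖ * (‖ψ‖ * ‖φ‖)} :=
      fun φ hφ => step1 φ hφ ψ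
    have := hclosed.closure_subset_iff.2 hsub
    rw [dense_span_bv.closure_eq] at this
    exact this (Set.mem_univ φ)
  -- conclude
  have hfinal : ∀ φ : Ell2 d L, ‖T φ‖ ≤ θ * ‖K‖ * ‖φ‖ := by
    intro φ
    rcases eq_or_ne (T φ) 0 with h0 | h0
    · rw [h0, norm_zero]
      positivity
    have := all_bound (T φ) φ
    rw [@inner_self_eq_norm_sq_to_K ℂ] at this
    rw [norm_pow, RCLike.norm_ofReal, abs_norm] at this
    have hTφ : 0 < ‖T φ‖ := norm_pos_iff.mpr h0
    nlinarith [norm_nonneg φ, norm_nonneg (T φ)]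
  exact T.opNorm_le_bound (by positivity) hfinal
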